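/- Let α ∈ (-1, 0) and let k be a positive integer. Then for every polynomial s of degree at most k-1, ∫_0^1 η·(s(η)·η - 1)²·η^α dη ≥ 1/(e²·(k+2)^{2(α+1)+2}). -/

import Mathlib

open Finset Polynomial MeasureTheory intervalIntegral

lemma pascal_split (k : ℕ) (g : ℕ → ℝ) :
    ∑ m ∈ range (k+2), (-1:ℝ)^m * ((k+1).choose m) * g m
      = ∑ m ∈ range (k+1), (-1:ℝ)^m * (k.choose m) * (g m - g (m+1)) := by
  rw [Finset.sum_range_succ' (fun m => (-1:ℝ)^m * ((k+1).choose m) * g m) (k+1)]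
  have h1 : ∀ m : ℕ, (-1:ℝ)^(m+1) * ((k+1).choose (m+1)) * g (m+1)
      = (-1)^(m+1) * (k.choose m) * g (m+1) + (-1)^(m+1) * (k.choose (m+1)) * g (m+1) := by
    intro m
    rw [Nat.choose_succ_succ]
    push_cast
    ring
  simp_rw [h1, Finset.sum_add_distrib]
  have h2 : ∑ m ∈ range (k+1), (-1:ℝ)^(m+1) * (k.choose (m+1)) * g (m+1)
      + (-1:ℝ)^0 * ((k+1).choose 0) * g 0
      = ∑ m ∈ range (k+2), (-1:ℝ)^m * (k.choose m) * g m := by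
    rw [Finset.sum_range_succ' (fun m => (-1:ℝ)^m * (k.choose m) * g m) (k+1)]
    norm_num
  have h3 : ∑ m ∈ range (k+2), (-1:ℝ)^m * (k.choose m) * g m
      = ∑ m ∈ range (k+1), (-1:ℝ)^m * (k.choose m) * g m := by
    rw [Finset.sum_range_succ]
    simp [Nat.choose_succ_self]
  calc ∑ m ∈ range (k+1), (-1:ℝ)^(m+1) * (k.choose m) * g (m+1)
        + ∑ m ∈ range (k+1), (-1:ℝ)^(m+1) * (k.choose (m+1)) * g (m+1)
        + (-1:ℝ)^0 * ((k+1).choose 0) * g 0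
      = ∑ m ∈ range (k+1), (-1:ℝ)^(m+1) * (k.choose m) * g (m+1)
        + ∑ m ∈ range (k+2), (-1:ℝ)^m * (k.choose m) * g m := by rw [add_assoc, h2]
    _ = ∑ m ∈ range (k+1), (-1:ℝ)^(m+1) * (k.choose m) * g (m+1)
        + ∑ m ∈ range (k+1), (-1:ℝ)^m * (k.choose m) * g m := by rw [h3]
    _ = ∑ m ∈ range (k+1), (-1:ℝ)^m * (k.choose m) * (g m - g (m+1)) := by
        rw [← Finset.sum_add_distrib]
        congr 1; funext m; ring

lemma comp_sub_degree (k : ℕ) (P : Polynomial ℝ) (hP : P.degree < (k+1 : ℕ)) :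
    (P - P.comp (X + C 1)).degree < (k : ℕ) := by
  rcases eq_or_ne P.natDegree 0 with h0 | h0
  · obtain ⟨c, rfl⟩ := Polynomial.natDegree_eq_zero.mp h0
    simp
  · have hP0 : P ≠ 0 := fun h => h0 (by simp [h])
    have hq : (X + C (1:ℝ)).natDegree = 1 := by
      simpa using Polynomial.natDegree_X_add_C (x := (1:ℝ))
    have hmon : (X + C (1:ℝ)).leadingCoeff = 1 := Polynomial.monic_X_add_C 1
    have hlc : (P.comp (X + C 1)).leadingCoeff = P.leadingCoeff := by
      rw [Polynomial.leadingCoeff_comp (by rw [hq]; norm_num), hmon]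
      simp
    have hcomp0 : P.comp (X + C 1) ≠ 0 := fun h => hP0 (Polynomial.leadingCoeff_eq_zero.mp
      (by rw [← hlc, h, Polynomial.leadingCoeff_zero]))
    have hnd : (P.comp (X + C 1)).natDegree = P.natDegree := by
      rw [Polynomial.natDegree_comp, hq, mul_one]
    have hd : P.degree = (P.comp (X + C 1)).degree := by
      rw [Polynomial.degree_eq_natDegree hP0, Polynomial.degree_eq_natDegree hcomp0, hnd]
    have h1 : (P - P.comp (X + C 1)).degree < P.degree :=
      Polynomial.degree_sub_lt hd hP0 hlc.symm
    have h2 : P.degree ≤ (k : ℕ) := by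
      rw [Polynomial.degree_eq_natDegree hP0] at hP ⊢
      exact_mod_cast Nat.lt_succ_iff.mp (by exact_mod_cast hP)
    exact lt_of_lt_of_le h1 h2

lemma alt_sum_poly : ∀ (k : ℕ) (P : Polynomial ℝ), P.degree < (k : ℕ) →
    ∑ m ∈ range (k+1), (-1:ℝ)^m * (k.choose m) * P.eval (m : ℝ) = 0 := by
  intro k
  induction k with
  | zero =>
    intro P hP
    have : P = 0 := by
      by_contra h
      rw [Polynomial.degree_eq_natDegree h] at hP
      exact absurd hP (by exact_mod_cast Nat.not_lt_zero _)
    simp [this]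
  | succ k ih =>
    intro P hP
    have hps := pascal_split k (fun m => P.eval (m : ℝ))
    rw [show k + 1 + 1 = k + 2 from rfl] at hps ⊢
    rw [hps]
    have hD : ∀ m : ℕ, P.eval ((m:ℝ)) - P.eval (((m+1 : ℕ)) : ℝ)
        = (P - P.comp (X + C 1)).eval (m : ℝ) := by
      intro m
      simp [Polynomial.eval_comp]
    calc ∑ m ∈ range (k+1), (-1:ℝ)^m * (k.choose m) * (P.eval ((m:ℕ):ℝ) - P.eval ((m+1:ℕ):ℝ))
        = ∑ m ∈ range (k+1), (-1:ℝ)^m * (k.choose m) * (P - P.comp (X + C 1)).eval (m:ℝ) := by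
          simp_rw [hD]
      _ = 0 := ih _ (comp_sub_degree k P (by exact_mod_cast hP))

lemma prod_shift_pos (k : ℕ) (γ : ℝ) (hγ : 0 < γ) :
    0 < ∏ l ∈ range (k+1), (γ + l) :=
  Finset.prod_pos (fun l _ => by positivity)

lemma alt_sum_inv : ∀ (k : ℕ) (γ : ℝ), 0 < γ →
    ∑ m ∈ range (k+1), (-1:ℝ)^m * (k.choose m) / (γ + m)
      = (Nat.factorial k : ℝ) / ∏ l ∈ range (k+1), (γ + l) := by
  intro k
  induction k with
  | zero => intro γ hγ; simp
  | succ k ih =>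
    intro γ hγ
    have hps := pascal_split k (fun m => 1 / (γ + m))
    have hsum : ∑ m ∈ range (k+2), (-1:ℝ)^m * ((k+1).choose m) / (γ + m)
        = ∑ m ∈ range (k+2), (-1:ℝ)^m * ((k+1).choose m) * (1 / (γ + m)) := by
      congr 1; funext m; ring
    rw [show k + 1 + 1 = k + 2 from rfl, hsum, hps]
    have hsplit : ∑ m ∈ range (k+1), (-1:ℝ)^m * (k.choose m) * (1/(γ + m) - 1/(γ + (m+1:ℕ)))
        = (∑ m ∈ range (k+1), (-1:ℝ)^m * (k.choose m) / (γ + m))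
          - ∑ m ∈ range (k+1), (-1:ℝ)^m * (k.choose m) / ((γ+1) + m) := by
      rw [← Finset.sum_sub_distrib]
      congr 1; funext m; push_cast; ring
    rw [hsplit, ih γ hγ, ih (γ+1) (by linarith)]
    have hA : 0 < ∏ l ∈ range (k+1), (γ + l) := prod_shift_pos k γ hγ
    have hB : 0 < ∏ l ∈ range (k+1), (γ + 1 + l) := by
      have := prod_shift_pos k (γ+1) (by linarith)
      simpa using this
    have hC1 : ∏ l ∈ range (k+2), (γ + l) = (∏ l ∈ range (k+1), (γ + 1 + l)) * γ := by
      rw [Finset.prod_range_succ' (fun l => γ + l) (k+1)]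
      push_cast
      simp [add_comm, add_assoc, add_left_comm]
    have hC2 : ∏ l ∈ range (k+2), (γ + l) = (∏ l ∈ range (k+1), (γ + l)) * (γ + (k+1)) := by
      rw [Finset.prod_range_succ]
      push_cast; ring_nf
    have hfac : ((Nat.factorial (k+1)) : ℝ) = (k+1) * (Nat.factorial k : ℝ) := by
      rw [Nat.factorial_succ]; push_cast; ring
    rw [hfac]
    rw [div_sub_div _ _ hA.ne' hB.ne', div_eq_div_iff (mul_ne_zero hA.ne' hB.ne')
      (by rw [hC1]; exact (mul_pos hB hγ).ne')]
    linear_combination ((Nat.factorial k : ℝ) * ∏ l ∈ range (k+1), (γ + 1 + l)) * hC2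
      - ((Nat.factorial k : ℝ) * ∏ l ∈ range (k+1), (γ + l)) * hC1

lemma central_identity (k : ℕ) (hk : 1 ≤ k) (γ : ℝ) (hγ : 0 < γ) (j : ℕ) (hj : j ≤ k) :
    ∑ m ∈ range (k+1), (-1:ℝ)^m * (k.choose m) * (∏ l ∈ Icc 1 k, (γ + m + l)) / (γ + m + j)
      = if j = 0 then (Nat.factorial k : ℝ)^2 / ∏ l ∈ range (k+1), (γ + l) else 0 := by
  rcases Nat.eq_zero_or_pos j with hj0 | hj1
  · subst hj0
    rw [if_pos rfl]
    simp only [Nat.cast_zero, add_zero]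
    -- partial fractions
    set F : Polynomial ℝ := ∏ l ∈ Icc 1 k, (X + C (l:ℝ)) with hF
    have hFeval : ∀ x : ℝ, F.eval x = ∏ l ∈ Icc 1 k, (x + l) := by
      intro x; rw [hF, Polynomial.eval_prod]; simp
    have hF0 : F.eval 0 = (Nat.factorial k : ℝ) := by
      rw [hFeval]
      simp only [zero_add]
      rw [← Nat.cast_prod]
      norm_cast
      rw [← Finset.Ico_add_one_right_eq_Icc]
      exact Finset.prod_Ico_id_eq_factorial k
    have hdvd : X ∣ (F - C (Nat.factorial k : ℝ)) := by
      rw [Polynomial.X_dvd_iff, Polynomial.coeff_sub, Polynomial.coeff_zero_eq_eval_zero, hF0]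
      simp
    obtain ⟨R, hR⟩ := hdvd
    have hFdecomp : ∀ x : ℝ, F.eval x = x * R.eval x + (Nat.factorial k : ℝ) := by
      intro x
      have : (F - C (Nat.factorial k : ℝ)).eval x = x * R.eval x := by
        rw [hR]; simp
      simp only [Polynomial.eval_sub, Polynomial.eval_C] at this
      linarith
    -- degree of R
    have hFdeg : F.degree = (k : ℕ) := by
      rw [hF, Polynomial.degree_prod]
      have : ∀ l ∈ Icc 1 k, (X + C (l:ℝ)).degree = 1 := fun l _ => Polynomial.degree_X_add_C _
      rw [Finset.sum_congr rfl this, Finset.sum_const, Nat.card_Icc]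
      simp [Nat.add_sub_cancel]
    have hRcompdeg : (R.comp (C γ + X)).degree < (k : ℕ) := by
      rcases eq_or_ne R 0 with h | h
      · simp [h]
      · have hGdeg : (F - C (Nat.factorial k : ℝ)).degree ≤ (k:ℕ) := by
          refine le_trans (Polynomial.degree_sub_le _ _) ?_
          rw [hFdeg]
          simp [Polynomial.degree_C_le]
          exact le_trans Polynomial.degree_C_le (by exact_mod_cast Nat.cast_nonneg' k)
        have hXR : (X * R).degree = 1 + R.degree := by
          rw [Polynomial.degree_mul, Polynomial.degree_X]
        have hRdeg : R.degree < (k : ℕ) := by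
          rw [hR, hXR] at hGdeg
          rw [Polynomial.degree_eq_natDegree h] at hGdeg ⊢
          have : (1 + R.natDegree : ℕ) ≤ k := by exact_mod_cast hGdeg
          exact_mod_cast Nat.lt_of_lt_of_le (Nat.lt_succ_self _) (by omega)
        have hnd : (R.comp (C γ + X)).natDegree ≤ R.natDegree := by
          refine le_trans (Polynomial.natDegree_comp_le) ?_
          have : (C γ + X).natDegree = 1 := by
            rw [add_comm]; simpa using Polynomial.natDegree_X_add_C (x := γ)
          rw [this, mul_one]
        calc (R.comp (C γ + X)).degree ≤ ((R.comp (C γ + X)).natDegree : WithBot ℕ) :=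
              Polynomial.degree_le_natDegree
          _ ≤ (R.natDegree : WithBot ℕ) := by exact_mod_cast hnd
          _ = R.degree := (Polynomial.degree_eq_natDegree h).symm
          _ < (k : ℕ) := hRdeg
    have hsummand : ∀ m : ℕ, (-1:ℝ)^m * (k.choose m) * (∏ l ∈ Icc 1 k, (γ + m + l)) / (γ + m)
        = (-1:ℝ)^m * (k.choose m) * (R.comp (C γ + X)).eval (m:ℝ)
          + (Nat.factorial k : ℝ) * ((-1:ℝ)^m * (k.choose m) / (γ + m)) := by
      intro m
      have hpos : (0:ℝ) < γ + m := by positivity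
      have hprod : ∏ l ∈ Icc 1 k, (γ + m + l) = (γ+m) * R.eval (γ+m) + (Nat.factorial k : ℝ) := by
        rw [← hFeval (γ + m), hFdecomp]
      have hcomp : (R.comp (C γ + X)).eval (m:ℝ) = R.eval (γ + m) := by
        rw [Polynomial.eval_comp]; simp
      rw [hprod, hcomp]
      field_simp
    rw [Finset.sum_congr rfl (fun m _ => hsummand m), Finset.sum_add_distrib]
    rw [alt_sum_poly k _ hRcompdeg, ← Finset.mul_sum, alt_sum_inv k γ hγ]
    rw [zero_add]
    ring
  · rw [if_neg (Nat.pos_iff_ne_zero.mp hj1)]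
    have hjmem : j ∈ Icc 1 k := Finset.mem_Icc.mpr ⟨hj1, hj⟩
    set P : Polynomial ℝ := ∏ l ∈ (Icc 1 k).erase j, (X + C (γ + l)) with hP
    have hPdeg : P.degree < (k : ℕ) := by
      rw [hP, Polynomial.degree_prod]
      have : ∀ l ∈ (Icc 1 k).erase j, (X + C (γ + (l:ℝ))).degree = 1 :=
        fun l _ => Polynomial.degree_X_add_C _
      rw [Finset.sum_congr rfl this, Finset.sum_const, Finset.card_erase_of_mem hjmem,
        Nat.card_Icc]
      simp only [Nat.add_sub_cancel, nsmul_eq_mul, mul_one]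
      exact_mod_cast (by omega : k - 1 < k)
    have hsummand : ∀ m : ℕ, (-1:ℝ)^m * (k.choose m) * (∏ l ∈ Icc 1 k, (γ + m + l)) / (γ + m + j)
        = (-1:ℝ)^m * (k.choose m) * P.eval (m:ℝ) := by
      intro m
      have hprod : ∏ l ∈ Icc 1 k, (γ + (m:ℝ) + l)
          = (γ + m + j) * ∏ l ∈ (Icc 1 k).erase j, (γ + m + l) :=
        (Finset.mul_prod_erase _ _ hjmem).symm
      have hPeval : P.eval (m:ℝ) = ∏ l ∈ (Icc 1 k).erase j, (γ + m + l) := by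
        rw [hP, Polynomial.eval_prod]
        refine Finset.prod_congr rfl fun l _ => ?_
        simp; ring
      have hpos : (0:ℝ) < γ + m + j := by positivity
      rw [hprod, hPeval, mul_comm (γ + (m:ℝ) + j), mul_div_assoc,
        mul_div_cancel_right₀ _ (ne_of_gt hpos)]
    rw [Finset.sum_congr rfl (fun m _ => hsummand m)]
    exact alt_sum_poly k P hPdeg

lemma rpow_contOn (c : ℝ) (hc : 0 < c) :
    ContinuousOn (fun x : ℝ => x ^ c) (Set.uIcc 0 1) := fun x _ =>
  (Real.continuousAt_rpow_const x c (Or.inr hc.le)).continuousWithinAt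

lemma pow_mul_rpow (i : ℕ) (c : ℝ) (hc : 0 < c) :
    Set.EqOn (fun x : ℝ => x ^ i * x ^ c) (fun x => x ^ (c + i)) (Set.uIcc 0 1) := by
  intro x hx
  rw [Set.uIcc_of_le (by norm_num : (0:ℝ) ≤ 1)] at hx
  rcases eq_or_lt_of_le hx.1 with h0 | h0
  · simp only [← h0]
    rcases Nat.eq_zero_or_pos i with hi | hi
    · subst hi; simp
    · rw [Real.zero_rpow (ne_of_gt hc), Real.zero_rpow (ne_of_gt (by positivity : (0:ℝ) < c + i)),
        mul_zero]
  · simp only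
    rw [← Real.rpow_natCast x i, ← Real.rpow_add h0, add_comm]

lemma integrable_mul_rpow (f : ℝ → ℝ) (hf : Continuous f) (c : ℝ) (hc : 0 < c) :
    IntervalIntegrable (fun x => f x * x ^ c) volume 0 1 :=
  (hf.continuousOn.mul (rpow_contOn c hc)).intervalIntegrable

lemma moment (c : ℝ) (hc : 0 < c) (i : ℕ) :
    ∫ x in (0:ℝ)..1, x ^ i * x ^ c = 1 / (c + i + 1) := by
  have hpos : (0:ℝ) < c + i := by positivity
  rw [intervalIntegral.integral_congr (pow_mul_rpow i c hc),
    integral_rpow (Or.inl (by linarith))]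
  rw [Real.one_rpow, Real.zero_rpow (by positivity)]
  norm_num

lemma poly_moment (n : ℕ) (a : ℕ → ℝ) (c : ℝ) (hc : 0 < c) :
    ∫ x in (0:ℝ)..1, (∑ m ∈ range n, a m * x ^ m) * x ^ c
      = ∑ m ∈ range n, a m / (c + m + 1) := by
  have h1 : ∀ x : ℝ, (∑ m ∈ range n, a m * x ^ m) * x ^ c
      = ∑ m ∈ range n, a m * (x ^ m * x ^ c) := by
    intro x; rw [Finset.sum_mul]; congr 1; funext m; ring
  simp_rw [h1]
  rw [intervalIntegral.integral_finset_sum (fun m _ => by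
    have := (integrable_mul_rpow (fun x => x ^ m) (continuous_pow m) c hc).const_mul (a m)
    simpa [mul_assoc] using this)]
  refine Finset.sum_congr rfl fun m _ => ?_
  rw [intervalIntegral.integral_const_mul, moment c hc m]
  ring

noncomputable def coefA (k : ℕ) (γ : ℝ) (m : ℕ) : ℝ :=
  (∏ l ∈ range (k+1), (γ + l)) / (Nat.factorial k : ℝ)^2
    * ((-1)^m * (k.choose m) * ∏ l ∈ Icc 1 k, (γ + m + l))

noncomputable def QS (k : ℕ) (γ : ℝ) (x : ℝ) : ℝ :=
  ∑ m ∈ range (k+1), coefA k γ m * x ^ m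

lemma QS_continuous (k : ℕ) (γ : ℝ) : Continuous (QS k γ) :=
  continuous_finset_sum _ (fun m _ => continuous_const.mul (continuous_pow m))

lemma Qmoment (k : ℕ) (hk : 1 ≤ k) (γ : ℝ) (hγ : 1 < γ) (i : ℕ) (hi : i ≤ k) :
    ∫ x in (0:ℝ)..1, QS k γ x * x ^ (γ - 1 + i) = if i = 0 then 1 else 0 := by
  have hγ0 : 0 < γ := by linarith
  have hc : 0 < γ - 1 + i := by
    have : (0:ℝ) ≤ i := Nat.cast_nonneg i
    linarith
  have h1 : ∫ x in (0:ℝ)..1, QS k γ x * x ^ (γ - 1 + i)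
      = ∑ m ∈ range (k+1), coefA k γ m / (γ - 1 + i + m + 1) := by
    simp only [QS]
    exact poly_moment (k+1) (coefA k γ) (γ - 1 + i) hc
  rw [h1]
  have h2 : ∀ m ∈ range (k+1), coefA k γ m / (γ - 1 + i + m + 1)
      = (∏ l ∈ range (k+1), (γ + l)) / (Nat.factorial k : ℝ)^2
        * ((-1:ℝ)^m * (k.choose m) * (∏ l ∈ Icc 1 k, (γ + m + l)) / (γ + m + i)) := by
    intro m _
    rw [coefA]
    have : γ - 1 + i + m + 1 = γ + m + i := by ring
    rw [this, mul_div_assoc]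
  rw [Finset.sum_congr rfl h2, ← Finset.mul_sum, central_identity k hk γ hγ0 i hi]
  have hprod : (0:ℝ) < ∏ l ∈ range (k+1), (γ + l) :=
    Finset.prod_pos (fun l _ => by positivity)
  have hfac : (0:ℝ) < (Nat.factorial k : ℝ) := by
    exact_mod_cast Nat.factorial_pos k
  rcases eq_or_ne i 0 with h | h
  · rw [if_pos h, if_pos h]
    field_simp
  · rw [if_neg h, if_neg h, mul_zero]

lemma pairing (k : ℕ) (hk : 1 ≤ k) (γ : ℝ) (hγ : 1 < γ) (r : Polynomial ℝ)
    (hr : r.natDegree ≤ k) :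
    ∫ x in (0:ℝ)..1, r.eval x * QS k γ x * x ^ (γ - 1) = r.coeff 0 := by
  have hγ0 : 0 < γ - 1 := by linarith
  have heval : ∀ x : ℝ, r.eval x = ∑ i ∈ range (k+1), r.coeff i * x ^ i := fun x =>
    Polynomial.eval_eq_sum_range' (Nat.lt_succ_of_le hr) x
  have h1 : ∀ x : ℝ, r.eval x * QS k γ x * x ^ (γ - 1)
      = ∑ i ∈ range (k+1), r.coeff i * (QS k γ x * x ^ i * x ^ (γ - 1)) := by
    intro x
    rw [heval x, Finset.sum_mul, Finset.sum_mul]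
    congr 1; funext i; ring
  simp_rw [h1]
  rw [intervalIntegral.integral_finset_sum (fun i _ => by
    exact (integrable_mul_rpow (fun x => QS k γ x * x ^ i)
      ((QS_continuous k γ).mul (continuous_pow i)) (γ-1) hγ0).const_mul (r.coeff i))]
  have h2 : ∀ i ∈ range (k+1),
      (∫ x in (0:ℝ)..1, r.coeff i * (QS k γ x * x ^ i * x ^ (γ - 1)))
      = r.coeff i * (if i = 0 then 1 else 0) := by
    intro i hi
    rw [intervalIntegral.integral_const_mul]
    congr 1
    have heqon : Set.EqOn (fun x : ℝ => QS k γ x * x ^ i * x ^ (γ - 1))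
        (fun x => QS k γ x * x ^ (γ - 1 + i)) (Set.uIcc 0 1) := by
      intro x hx
      simp only
      rw [mul_assoc, show x ^ i * x ^ (γ-1) = x ^ (γ-1+i) from pow_mul_rpow i (γ-1) hγ0 hx]
    rw [intervalIntegral.integral_congr heqon]
    exact Qmoment k hk γ hγ i (Nat.lt_succ_iff.mp (Finset.mem_range.mp hi))
  rw [Finset.sum_congr rfl h2]
  rw [Finset.sum_eq_single_of_mem 0 (Finset.mem_range.mpr (by omega))
    (fun i _ hi => by rw [if_neg hi, mul_zero])]
  simp

-- telescoping product
lemma telescope (k : ℕ) : ∏ i ∈ range k, ((i+2:ℝ)/(i+1)) = k + 1 := by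
  induction k with
  | zero => simp
  | succ k ih =>
    rw [Finset.prod_range_succ, ih]
    have : (k:ℝ) + 1 ≠ 0 := by positivity
    field_simp
    push_cast; ring

lemma coefA_zero_eq (k : ℕ) (γ : ℝ) (hγ : 0 < γ) :
    coefA k γ 0 = γ * (∏ i ∈ range k, ((γ + 1 + i)/(1 + i)))^2 := by
  have hIcc : ∀ (g : ℕ → ℝ), ∏ l ∈ Icc 1 k, g l = ∏ i ∈ range k, g (1 + i) := by
    intro g
    rw [← Finset.Ico_add_one_right_eq_Icc, Finset.prod_Ico_eq_prod_range]
    simp [add_comm]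
  have h1 : ∏ l ∈ range (k+1), (γ + l) = γ * ∏ i ∈ range k, (γ + 1 + i) := by
    rw [Finset.prod_range_succ' (fun l => γ + l) k]
    push_cast
    rw [add_zero, mul_comm]
    congr 1
    refine Finset.prod_congr rfl fun i _ => by push_cast; ring
  have h2 : (Nat.factorial k : ℝ) = ∏ i ∈ range k, ((1:ℝ) + i) := by
    rw [← Finset.prod_range_add_one_eq_factorial k]
    push_cast
    refine Finset.prod_congr rfl fun i _ => by ring
  have h3 : ∏ l ∈ Icc 1 k, (γ + (0:ℕ) + l) = ∏ i ∈ range k, (γ + 1 + i) := by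
    rw [hIcc (fun l => γ + (0:ℕ) + l)]
    refine Finset.prod_congr rfl fun i _ => by push_cast; ring
  have hfp : (0:ℝ) < ∏ i ∈ range k, ((1:ℝ) + i) :=
    Finset.prod_pos fun i _ => by positivity
  rw [coefA, h1, h2, h3]
  rw [Finset.prod_div_distrib]
  simp only [pow_zero, Nat.choose_zero_right, Nat.cast_one, one_mul]
  field_simp

lemma coefA_zero_le (k : ℕ) (γ : ℝ) (hγ1 : 1 ≤ γ) :
    coefA k γ 0 ≤ γ * (((k:ℝ)+1) ^ γ) ^ 2 := by
  have hγ0 : 0 < γ := by linarith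
  rw [coefA_zero_eq k γ hγ0]
  have hBnn : (0:ℝ) ≤ ∏ i ∈ range k, ((γ + 1 + i)/(1 + i)) :=
    Finset.prod_nonneg fun i _ => by positivity
  have hB : ∏ i ∈ range k, ((γ + 1 + i)/(1 + i)) ≤ ((k:ℝ)+1) ^ γ := by
    calc ∏ i ∈ range k, ((γ + 1 + i)/(1 + i))
        ≤ ∏ i ∈ range k, ((1 + 1/(1+(i:ℝ))) ^ γ) := by
          refine Finset.prod_le_prod (fun i _ => by positivity) (fun i _ => ?_)
          have hi : (0:ℝ) < 1 + i := by positivity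
          have heq : (γ + 1 + i)/(1 + i) = 1 + γ * (1/(1+(i:ℝ))) := by
            field_simp
            ring
          rw [heq]
          have h01 : (0:ℝ) ≤ 1/(1+(i:ℝ)) := by positivity
          exact one_add_mul_self_le_rpow_one_add (by linarith) hγ1
      _ = (∏ i ∈ range k, (1 + 1/(1+(i:ℝ)))) ^ γ :=
          Real.finset_prod_rpow _ _ (fun i _ => by positivity) γ
      _ = ((k:ℝ)+1) ^ γ := by
          have : ∏ i ∈ range k, (1 + 1/(1+(i:ℝ))) = ∏ i ∈ range k, ((i+2:ℝ)/(i+1)) := by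
            refine Finset.prod_congr rfl fun i _ => ?_
            have hi : (0:ℝ) < 1 + i := by positivity
            field_simp
            ring
          rw [this, telescope]
  have := pow_le_pow_left₀ hBnn hB 2
  nlinarith

set_option maxHeartbeats 1000000 in
theorem stmt_18 (α : ℝ) (hα : α ∈ Set.Ioo (-1 : ℝ) 0) (k : ℕ) (hk : 1 ≤ k)
    (s : Polynomial ℝ) (hs : s.degree < k) :
    (∫ η in (0 : ℝ)..1, η * (s.eval η * η - 1) ^ 2 * η ^ α) ≥
      1 / (Real.exp 1 ^ 2 * ((k : ℝ) + 2) ^ (2 * (α + 1) + 2)) := by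
  obtain ⟨hα1, hα2⟩ := hα
  set γ : ℝ := α + 2 with hγdef
  have hγ1 : 1 < γ := by simp [hγdef]; linarith
  have hγ2 : γ < 2 := by simp [hγdef]; linarith
  have hγ0 : 0 < γ := by linarith
  set p : Polynomial ℝ := s * X - 1 with hpdef
  -- degree of p
  have hpdeg : p.natDegree ≤ k := by
    have h1 : (s * X).degree ≤ (k : WithBot ℕ) := by
      rcases eq_or_ne s 0 with h | h
      · simp [h]
      · rw [Polynomial.degree_mul, Polynomial.degree_X]
        calc s.degree + 1 ≤ ((k-1 : ℕ) : WithBot ℕ) + 1 := by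
              gcongr
              rw [Polynomial.degree_eq_natDegree h] at hs ⊢
              exact_mod_cast Nat.le_sub_one_of_lt (by exact_mod_cast hs)
          _ ≤ (k : WithBot ℕ) := by
              have hcast : ((k-1 : ℕ) : WithBot ℕ) + 1 = ((k - 1 + 1 : ℕ) : WithBot ℕ) := by
                push_cast; ring
              rw [hcast]
              exact_mod_cast (by omega : k - 1 + 1 ≤ k)
    have h2 : p.degree ≤ (k : WithBot ℕ) := by
      rw [hpdef]
      refine le_trans (Polynomial.degree_sub_le _ _) ?_
      simp only [max_le_iff]
      exact ⟨h1, le_trans Polynomial.degree_one_le (by exact_mod_cast Nat.cast_nonneg' k)⟩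
    exact Polynomial.natDegree_le_iff_degree_le.mpr h2
  have hpc0 : p.coeff 0 = -1 := by
    rw [hpdef]
    simp [Polynomial.coeff_mul_X_zero]
  -- positivity of J
  set J : ℝ := coefA k γ 0 with hJdef
  have hJpos : 0 < J := by
    rw [hJdef, coefA_zero_eq k γ hγ0]
    have : (0:ℝ) < ∏ i ∈ range k, ((γ + 1 + i)/(1 + i)) :=
      Finset.prod_pos fun i _ => by positivity
    positivity
  -- the three integrals
  have hpcont : Continuous fun x : ℝ => p.eval x := Polynomial.continuous_aeval p
  have hQcont := QS_continuous k γ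
  have hIpQ : ∫ x in (0:ℝ)..1, p.eval x * QS k γ x * x ^ (γ - 1) = -1 := by
    rw [pairing k hk γ hγ1 p hpdeg, hpc0]
  have hIQQ : ∫ x in (0:ℝ)..1, QS k γ x * QS k γ x * x ^ (γ - 1) = J := by
    set QP : Polynomial ℝ := ∑ m ∈ range (k+1), C (coefA k γ m) * X ^ m with hQP
    have hQPeval : ∀ x : ℝ, QP.eval x = QS k γ x := by
      intro x
      rw [hQP, QS, Polynomial.eval_finset_sum]
      simp
    have hQPdeg : QP.natDegree ≤ k := by
      refine le_trans (Polynomial.natDegree_sum_le _ _) ?_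
      rw [Finset.fold_max_le]
      refine ⟨Nat.zero_le _, fun m hm => ?_⟩
      refine le_trans (Polynomial.natDegree_C_mul_le _ _) ?_
      rw [Polynomial.natDegree_X_pow]
      exact Nat.lt_succ_iff.mp (Finset.mem_range.mp hm)
    have hQPc0 : QP.coeff 0 = coefA k γ 0 := by
      rw [hQP, Polynomial.finset_sum_coeff]
      rw [Finset.sum_eq_single_of_mem 0 (Finset.mem_range.mpr (by omega))]
      · simp
      · intro i _ hi
        rw [Polynomial.coeff_C_mul, Polynomial.coeff_X_pow, if_neg (by omega)]
        ring
    have := pairing k hk γ hγ1 QP hQPdeg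
    rw [hQPc0] at this
    rw [← hJdef] at this
    rw [← this]
    refine intervalIntegral.integral_congr fun x _ => ?_
    simp only [hQPeval]
  -- expansion and nonnegativity
  have hInn : 0 ≤ ∫ x in (0:ℝ)..1, (p.eval x + (1/J) * QS k γ x)^2 * x ^ (γ - 1) := by
    refine intervalIntegral.integral_nonneg (by norm_num) (fun x hx => ?_)
    have : (0:ℝ) ≤ x ^ (γ - 1) := Real.rpow_nonneg hx.1 _
    positivity
  have hexp : ∀ x : ℝ, (p.eval x + (1/J) * QS k γ x)^2 * x ^ (γ - 1)
      = p.eval x ^ 2 * x ^ (γ - 1)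
        + ((2/J) * (p.eval x * QS k γ x * x ^ (γ - 1))
          + (1/J)^2 * (QS k γ x * QS k γ x * x ^ (γ - 1))) := by
    intro x; ring
  have hi1 : IntervalIntegrable (fun x => p.eval x ^ 2 * x ^ (γ - 1)) volume 0 1 :=
    integrable_mul_rpow _ (by continuity) (γ - 1) (by linarith)
  have hi2 : IntervalIntegrable (fun x => p.eval x * QS k γ x * x ^ (γ - 1)) volume 0 1 :=
    integrable_mul_rpow _ (by continuity) (γ - 1) (by linarith)
  have hi3 : IntervalIntegrable (fun x => QS k γ x * QS k γ x * x ^ (γ - 1)) volume 0 1 :=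
    integrable_mul_rpow _ (by continuity) (γ - 1) (by linarith)
  have hsplit : ∫ x in (0:ℝ)..1, (p.eval x + (1/J) * QS k γ x)^2 * x ^ (γ - 1)
      = (∫ x in (0:ℝ)..1, p.eval x ^ 2 * x ^ (γ - 1))
        + ((2/J) * (∫ x in (0:ℝ)..1, p.eval x * QS k γ x * x ^ (γ - 1))
          + (1/J)^2 * (∫ x in (0:ℝ)..1, QS k γ x * QS k γ x * x ^ (γ - 1))) := by
    simp_rw [hexp]
    rw [intervalIntegral.integral_add hi1 ((hi2.const_mul (2/J)).add (hi3.const_mul ((1/J)^2)))]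
    rw [intervalIntegral.integral_add (hi2.const_mul (2/J)) (hi3.const_mul ((1/J)^2))]
    rw [intervalIntegral.integral_const_mul, intervalIntegral.integral_const_mul]
  have hmain : (1:ℝ)/J ≤ ∫ x in (0:ℝ)..1, p.eval x ^ 2 * x ^ (γ - 1) := by
    rw [hsplit, hIpQ, hIQQ] at hInn
    have : (2/J) * (-1) + (1/J)^2 * J = -(1/J) := by
      field_simp
      ring
    rw [this] at hInn
    linarith
  -- bridge to the original integrand
  have hbridge : (∫ η in (0 : ℝ)..1, η * (s.eval η * η - 1) ^ 2 * η ^ α)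
      = ∫ x in (0:ℝ)..1, p.eval x ^ 2 * x ^ (γ - 1) := by
    refine intervalIntegral.integral_congr fun x hx => ?_
    rw [Set.uIcc_of_le (by norm_num : (0:ℝ) ≤ 1)] at hx
    have hpe : p.eval x = s.eval x * x - 1 := by
      rw [hpdef]; simp
    simp only [hpe]
    rcases eq_or_lt_of_le hx.1 with h0 | h0
    · rw [← h0]
      rw [Real.zero_rpow (by linarith : γ - 1 ≠ 0)]
      ring
    · have : x * x ^ α = x ^ (γ - 1) := by
        nth_rewrite 1 [← Real.rpow_one x]
        rw [← Real.rpow_add h0]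
        congr 1
        rw [hγdef]; ring
      rw [← this]
      ring
  -- final numeric bound
  have hJle : J ≤ Real.exp 1 ^ 2 * ((k : ℝ) + 2) ^ (2 * (α + 1) + 2) := by
    have h1 : J ≤ γ * (((k:ℝ)+1) ^ γ) ^ 2 := coefA_zero_le k γ (le_of_lt hγ1)
    have hk1 : (0:ℝ) < (k:ℝ) + 1 := by positivity
    have h2 : (((k:ℝ)+1) ^ γ) ^ 2 = ((k:ℝ)+1) ^ (2 * (α + 1) + 2) := by
      rw [sq, ← Real.rpow_add hk1]
      congr 1
      rw [hγdef]; ring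
    have h3 : ((k:ℝ)+1) ^ (2 * (α + 1) + 2) ≤ ((k:ℝ)+2) ^ (2 * (α + 1) + 2) := by
      refine Real.rpow_le_rpow (by positivity) (by linarith) (by linarith)
    have h4 : γ ≤ Real.exp 1 ^ 2 := by
      have he : (2:ℝ) ≤ Real.exp 1 := by
        have := Real.add_one_le_exp 1
        linarith
      nlinarith
    have h5 : (0:ℝ) < ((k:ℝ)+2) ^ (2 * (α + 1) + 2) := Real.rpow_pos_of_pos (by positivity) _
    calc J ≤ γ * (((k:ℝ)+1) ^ γ) ^ 2 := h1
      _ = γ * ((k:ℝ)+1) ^ (2 * (α + 1) + 2) := by rw [h2]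
      _ ≤ Real.exp 1 ^ 2 * ((k : ℝ) + 2) ^ (2 * (α + 1) + 2) := by
          have h6 : (0:ℝ) ≤ ((k:ℝ)+1) ^ (2 * (α + 1) + 2) := by positivity
          nlinarith
  rw [ge_iff_le, hbridge]
  calc 1 / (Real.exp 1 ^ 2 * ((k : ℝ) + 2) ^ (2 * (α + 1) + 2)) ≤ 1 / J :=
        one_div_le_one_div_of_le hJpos hJle
    _ ≤ _ := hmain
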